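/- Suppose α is irrational of bounded type and β = (t/r)α + (u/s) with integers t, r, u, s, r,s ≥ 1, and β ∉ ℤα + ℤ. Then there exists c > 0 such that for all n ≥ 1 and all integers j with 0 ≤ |j| ≤ q_n, one has ‖β − jα‖ ≥ c/q_n. -/

import Mathlib

/-- Denominators of the continued fraction convergents of a real number. -/
noncomputable def contDen (α : ℝ) (n : ℕ) : ℝ := (GenContFract.of α).dens n

/-- Distance from a real number to the nearest integer. -/
noncomputable def nint (x : ℝ) : ℝ := |x - (round x : ℝ)|

/-- `α` is of bounded type: the partial quotients in its continued fraction expansion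
are bounded. -/
def BoundedType (α : ℝ) : Prop :=
  ∃ M : ℝ, ∀ n : ℕ, ∀ b : ℝ, (GenContFract.of α).partDens.get? n = some b → b ≤ M

/-- Membership in the subgroup ℤα + ℤ of ℝ. -/
def InZalphaZ (α β : ℝ) : Prop := ∃ m k : ℤ, β = (m : ℝ) * α + (k : ℝ)

set_option maxHeartbeats 1000000

namespace CFAux
open GenContFract
variable {α : ℝ}

theorem notTerm (hα : Irrational α) (n : ℕ) : ¬ (GenContFract.of α).TerminatedAt n := by
  intro h
  have hterm : (GenContFract.of α).Terminates := ⟨n, h⟩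
  obtain ⟨q, hq⟩ := (GenContFract.terminates_iff_rat α).mp hterm
  exact hα ⟨q, hq.symm⟩

theorem stream_some {α : ℝ} (hα : Irrational α) (n : ℕ) :
    ∃ ifp, IntFractPair.stream α n = some ifp := by
  cases n with
  | zero => exact ⟨_, IntFractPair.stream_zero α⟩
  | succ n =>
    have h := notTerm hα n
    rw [of_terminatedAt_n_iff_succ_nth_intFractPair_stream_eq_none] at h
    exact Option.ne_none_iff_exists'.mp h

theorem fr_pos {α : ℝ} (hα : Irrational α) {n : ℕ} {ifp : IntFractPair ℝ}
    (h : IntFractPair.stream α n = some ifp) : 0 < ifp.fr := by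
  rcases (IntFractPair.nth_stream_fr_nonneg h).lt_or_eq with h' | h'
  · exact h'
  · exfalso
    obtain ⟨ifp', h2⟩ := stream_some hα (n + 1)
    rw [IntFractPair.succ_nth_stream_eq_none_iff.mpr (Or.inr ⟨ifp, h, h'.symm⟩)] at h2
    cases h2


theorem one_le_den (hα : Irrational α) (n : ℕ) : (1 : ℝ) ≤ (GenContFract.of α).dens n := by
  have h := succ_nth_fib_le_of_nth_den (v := α) (n := n) (Or.inr (notTerm hα (n - 1)))
  have h1 : (1 : ℝ) ≤ (Nat.fib (n + 1) : ℝ) := by exact_mod_cast Nat.fib_pos.mpr n.succ_pos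
  linarith

theorem den_pos (hα : Irrational α) (n : ℕ) : (0 : ℝ) < (GenContFract.of α).dens n :=
  lt_of_lt_of_le one_pos (one_le_den hα n)

/-- structure of the `n`-th element of the cf sequence -/
theorem s_get (hα : Irrational α) (n : ℕ) :
    ∃ b : ℝ, (GenContFract.of α).s.get? n = some ⟨1, b⟩ ∧ 1 ≤ b ∧ (∃ z : ℤ, b = (z : ℝ)) ∧
      (GenContFract.of α).partDens.get? n = some b := by
  obtain ⟨gp, hgp⟩ := Option.ne_none_iff_exists'.mp (notTerm hα n)
  obtain ⟨ha, hz⟩ := of_partNum_eq_one_and_exists_int_partDen_eq hgp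
  have hpd : (GenContFract.of α).partDens.get? n = some gp.b := partDen_eq_s_b hgp
  refine ⟨gp.b, ?_, of_one_le_get?_partDen hpd, hz, hpd⟩
  · rw [hgp]; congr 1; cases gp; simp_all

/-- two-step recurrences -/
theorem den_rec (hα : Irrational α) (n : ℕ) :
    ∃ b : ℝ, 1 ≤ b ∧ (∃ z : ℤ, b = (z : ℝ)) ∧
      (GenContFract.of α).partDens.get? (n+1) = some b ∧
      (GenContFract.of α).dens (n + 2) = b * (GenContFract.of α).dens (n+1) +
        (GenContFract.of α).dens n ∧
      (GenContFract.of α).nums (n + 2) = b * (GenContFract.of α).nums (n+1) +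
        (GenContFract.of α).nums n := by
  obtain ⟨b, hget, hb1, hbz, hpd⟩ := s_get hα (n + 1)
  refine ⟨b, hb1, hbz, hpd, ?_, ?_⟩
  · have := dens_recurrence (g := GenContFract.of α) (n := n) hget rfl rfl
    simpa using this
  · have := nums_recurrence (g := GenContFract.of α) (n := n) hget rfl rfl
    simpa using this

theorem den_add (hα : Irrational α) (n : ℕ) :
    (GenContFract.of α).dens (n+1) + (GenContFract.of α).dens n ≤
      (GenContFract.of α).dens (n + 2) := by
  obtain ⟨b, hb1, -, -, hrec, -⟩ := den_rec hα n
  have h1 := den_pos hα (n+1)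
  nlinarith

/-- numerators and denominators are integers -/
theorem num_den_int (hα : Irrational α) (n : ℕ) :
    (∃ P : ℤ, (GenContFract.of α).nums n = (P : ℝ)) ∧
    (∃ Q : ℤ, (GenContFract.of α).dens n = (Q : ℝ)) := by
  induction n using Nat.strong_induction_on with
  | _ n ih =>
    match n with
    | 0 =>
      refine ⟨⟨⌊α⌋, ?_⟩, ⟨1, ?_⟩⟩
      · rw [zeroth_num_eq_h, of_h_eq_floor]
      · rw [zeroth_den_eq_one]; norm_num
    | 1 =>
      obtain ⟨b, hget, hb1, ⟨z, hz⟩, -⟩ := s_get hα 0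
      constructor
      · refine ⟨z * ⌊α⌋ + 1, ?_⟩
        rw [first_num_eq hget, of_h_eq_floor, hz]
        push_cast; ring
      · exact ⟨z, by rw [first_den_eq hget, hz]⟩
    | (k + 2) =>
      obtain ⟨⟨P0, hP0⟩, ⟨Q0, hQ0⟩⟩ := ih k (by omega)
      obtain ⟨⟨P1, hP1⟩, ⟨Q1, hQ1⟩⟩ := ih (k+1) (by omega)
      obtain ⟨b, hb1, ⟨z, hz⟩, -, hrecd, hrecn⟩ := den_rec hα k
      constructor
      · exact ⟨z * P1 + P0, by rw [hrecn, hz, hP1, hP0]; push_cast; ring⟩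
      · exact ⟨z * Q1 + Q0, by rw [hrecd, hz, hQ1, hQ0]; push_cast; ring⟩


theorem sign_lemma (hα : Irrational α) (n : ℕ) :
    0 < (-1 : ℝ) ^ n * ((GenContFract.of α).dens n * α - (GenContFract.of α).nums n) := by
  obtain ⟨ifp, hifp⟩ := stream_some hα n
  have hfr : 0 < ifp.fr := fr_pos hα hifp
  have hsub := sub_convs_eq hifp
  simp only [if_neg hfr.ne'] at hsub
  set B := ((GenContFract.of α).contsAux (n + 1)).b with hB
  set pB := ((GenContFract.of α).contsAux n).b with hpB
  have hBd : (GenContFract.of α).dens n = B := by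
    rw [den_eq_conts_b, nth_cont_eq_succ_nth_contAux]
  have hpB0 : 0 ≤ pB := zero_le_of_contsAux_b
  have hB1 : (0:ℝ) < B := by rw [← hBd]; exact den_pos hα n
  have hD : 0 < B * (ifp.fr⁻¹ * B + pB) := by positivity
  have hconv : (GenContFract.of α).convs n =
      (GenContFract.of α).nums n / (GenContFract.of α).dens n := conv_eq_num_div_den
  have hne : (GenContFract.of α).dens n ≠ 0 := (den_pos hα n).ne'
  have key : (GenContFract.of α).dens n * α - (GenContFract.of α).nums n =
      (GenContFract.of α).dens n * ((-1) ^ n / (B * (ifp.fr⁻¹ * B + pB))) := by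
    rw [← hsub, hconv]
    field_simp
  rw [key]
  have hsq : ((-1:ℝ) ^ n) * ((-1:ℝ) ^ n) = 1 := by
    rw [← pow_add, ← two_mul, pow_mul]; norm_num
  have hpos : 0 < (GenContFract.of α).dens n / (B * (ifp.fr⁻¹ * B + pB)) := by
    exact div_pos (den_pos hα n) hD
  have heq : (-1:ℝ) ^ n * ((GenContFract.of α).dens n * ((-1) ^ n / (B * (ifp.fr⁻¹ * B + pB))))
      = ((-1:ℝ) ^ n * (-1:ℝ) ^ n) * ((GenContFract.of α).dens n / (B * (ifp.fr⁻¹ * B + pB))) := by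
    ring
  rw [heq, hsq, one_mul]
  exact hpos

theorem det_eq (hα : Irrational α) (n : ℕ) :
    (GenContFract.of α).nums n * (GenContFract.of α).dens (n+1) -
      (GenContFract.of α).dens n * (GenContFract.of α).nums (n+1) = (-1 : ℝ) ^ (n+1) :=
  SimpContFract.determinant (s := SimpContFract.of α) (notTerm hα n)

theorem abs_upper (hα : Irrational α) (n : ℕ) :
    |(GenContFract.of α).dens n * α - (GenContFract.of α).nums n| ≤
      1 / (GenContFract.of α).dens (n+1) := by
  have h := abs_sub_convs_le (notTerm hα n)
  have hc : (GenContFract.of α).convs n =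
      (GenContFract.of α).nums n / (GenContFract.of α).dens n := conv_eq_num_div_den
  have h0 := den_pos hα n
  have h1 := den_pos hα (n+1)
  have key : (GenContFract.of α).dens n * α - (GenContFract.of α).nums n =
      (GenContFract.of α).dens n * (α - (GenContFract.of α).convs n) := by
    rw [hc]; field_simp
  rw [key, abs_mul, abs_of_pos h0]
  calc (GenContFract.of α).dens n * |α - (GenContFract.of α).convs n|
      ≤ (GenContFract.of α).dens n * (1 / ((GenContFract.of α).dens n *
          (GenContFract.of α).dens (n+1))) := by
        exact mul_le_mul_of_nonneg_left h h0.le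
    _ = 1 / (GenContFract.of α).dens (n+1) := by field_simp

theorem abs_lower (hα : Irrational α) (n : ℕ) :
    1 / (2 * (GenContFract.of α).dens (n+1)) ≤
      |(GenContFract.of α).dens n * α - (GenContFract.of α).nums n| := by
  set q0 := (GenContFract.of α).dens n
  set q1 := (GenContFract.of α).dens (n+1)
  set q2 := (GenContFract.of α).dens (n+2)
  set x0 := (GenContFract.of α).dens n * α - (GenContFract.of α).nums n with hx0
  set x1 := (GenContFract.of α).dens (n+1) * α - (GenContFract.of α).nums (n+1) with hx1
  have hdet := det_eq hα n
  have hone : |q1 * x0 - q0 * x1| = 1 := by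
    have : q1 * x0 - q0 * x1 = -((GenContFract.of α).nums n * q1 - q0 *
        (GenContFract.of α).nums (n+1)) := by rw [hx0, hx1]; ring
    rw [this, hdet, abs_neg, abs_pow, abs_neg, abs_one, one_pow]
  have hub1 : |x1| ≤ 1 / q2 := abs_upper hα (n+1)
  have h0 := den_pos hα n
  have h1 := den_pos hα (n+1)
  have h2 := den_pos hα (n+2)
  have hmono : q0 ≤ q1 := of_den_mono
  have hq2 : 2 * q0 ≤ q2 := by have := den_add hα n; linarith
  have hq0q2 : q0 / q2 ≤ 1 / 2 := by
    rw [div_le_div_iff₀ h2 (by norm_num)]; linarith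
  have htri : (1:ℝ) ≤ q1 * |x0| + q0 * |x1| := by
    calc (1:ℝ) = |q1 * x0 - q0 * x1| := hone.symm
      _ ≤ |q1 * x0| + |q0 * x1| := abs_sub _ _
      _ = q1 * |x0| + q0 * |x1| := by rw [abs_mul, abs_mul, abs_of_pos h1, abs_of_pos h0]
  have h4 : q0 * |x1| ≤ 1/2 := by
    calc q0 * |x1| ≤ q0 * (1/q2) := mul_le_mul_of_nonneg_left hub1 h0.le
      _ = q0 / q2 := by ring
      _ ≤ 1/2 := hq0q2
  rw [div_le_iff₀ (by positivity)]
  nlinarith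


theorem abs_le_abs_add {u v : ℝ} (h : 0 ≤ u * v) : |u| ≤ |u + v| := by
  nlinarith [sq_abs u, sq_abs (u + v), abs_nonneg u, abs_nonneg (u + v), sq_nonneg v]

theorem best_approx (hα : Irrational α) (n : ℕ) (P Q : ℤ) (hQ : 1 ≤ Q)
    (hQlt : (Q : ℝ) < (GenContFract.of α).dens (n+1)) :
    |(GenContFract.of α).dens n * α - (GenContFract.of α).nums n| ≤ |(Q:ℝ) * α - (P:ℝ)| := by
  obtain ⟨⟨P0, hP0⟩, ⟨Q0, hQ0⟩⟩ := num_den_int hα n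
  obtain ⟨⟨P1, hP1⟩, ⟨Q1, hQ1⟩⟩ := num_den_int hα (n+1)
  -- basic positivity of the integer denominators
  have hQ0pos : 1 ≤ Q0 := by
    have := one_le_den hα n; rw [hQ0] at this; exact_mod_cast this
  have hQ1pos : 1 ≤ Q1 := by
    have := one_le_den hα (n+1); rw [hQ1] at this; exact_mod_cast this
  have hQlt' : Q < Q1 := by rw [hQ1] at hQlt; exact_mod_cast hQlt
  -- the determinant
  set d : ℤ := P0 * Q1 - Q0 * P1 with hd_def
  have hdR : (d : ℝ) = (-1 : ℝ) ^ (n+1) := by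
    push_cast [hd_def]
    rw [← hP0, ← hQ0, ← hP1, ← hQ1]
    exact det_eq hα n
  have hd2 : d * d = 1 := by
    have : ((d * d : ℤ) : ℝ) = 1 := by
      push_cast
      rw [hdR, ← pow_add, ← two_mul, pow_mul]
      norm_num
    exact_mod_cast this
  -- change of basis
  set a : ℤ := d * (P * Q1 - Q * P1) with ha_def
  set b : ℤ := d * (Q * P0 - P * Q0) with hb_def
  have hkeyQ : a * Q0 + b * Q1 = Q := by
    have h1 : a * Q0 + b * Q1 = (d * d) * Q := by rw [ha_def, hb_def, hd_def]; ring
    rw [h1, hd2, one_mul]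
  have hkeyP : a * P0 + b * P1 = P := by
    have h1 : a * P0 + b * P1 = (d * d) * P := by rw [ha_def, hb_def, hd_def]; ring
    rw [h1, hd2, one_mul]
  -- error terms
  set x0 : ℝ := (GenContFract.of α).dens n * α - (GenContFract.of α).nums n with hx0
  set x1 : ℝ := (GenContFract.of α).dens (n+1) * α - (GenContFract.of α).nums (n+1) with hx1
  have hQR : ((a : ℝ) * Q0 + (b : ℝ) * Q1) = (Q : ℝ) := by exact_mod_cast congrArg (Int.cast : ℤ → ℝ) hkeyQ
  have hPR : ((a : ℝ) * P0 + (b : ℝ) * P1) = (P : ℝ) := by exact_mod_cast congrArg (Int.cast : ℤ → ℝ) hkeyP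
  have hsplit : (Q:ℝ) * α - (P:ℝ) = (a:ℝ) * x0 + (b:ℝ) * x1 := by
    rw [hx0, hx1, hP0, hQ0, hP1, hQ1, ← hQR, ← hPR]; ring
  rw [hsplit]
  rcases eq_or_ne b 0 with hb | hb
  · -- b = 0 : multiple of the convergent
    have ha0 : a ≠ 0 := by
      intro ha0
      rw [ha0, hb] at hkeyQ; simp at hkeyQ; omega
    have ha1 : (1:ℝ) ≤ |(a:ℝ)| := by exact_mod_cast Int.one_le_abs ha0
    rw [hb]
    push_cast
    rw [zero_mul, add_zero, abs_mul]
    nlinarith [abs_nonneg x0]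
  · rcases eq_or_ne a 0 with ha | ha
    · -- a = 0 : impossible
      exfalso
      rw [ha, zero_mul, zero_add] at hkeyQ
      have hbpos : 1 ≤ b := by nlinarith
      nlinarith
    · -- both nonzero: a and b have opposite signs
      have hab : a * b < 0 := by
        rcases lt_or_gt_of_ne ha with ha' | ha' <;> rcases lt_or_gt_of_ne hb with hb' | hb'
        · exfalso; nlinarith
        · exact mul_neg_of_neg_of_pos ha' hb'
        · exact mul_neg_of_pos_of_neg ha' hb'
        · exfalso; nlinarith
      have hx01 : x0 * x1 < 0 := by
        have s0 := sign_lemma hα n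
        have s1 := sign_lemma hα (n+1)
        rw [pow_succ] at s1
        rw [← hx0] at s0
        rw [← hx1] at s1
        nlinarith [mul_pos s0 s1, sq_nonneg ((-1:ℝ)^n), pow_mul_pow_eq_one n (by norm_num : (-1:ℝ) * (-1) = 1)]
      have habR : ((a:ℝ) * b) < 0 := by exact_mod_cast hab
      have huv : 0 < ((a:ℝ) * x0) * ((b:ℝ) * x1) := by
        have : ((a:ℝ) * x0) * ((b:ℝ) * x1) = ((a:ℝ) * b) * (x0 * x1) := by ring
        rw [this]
        exact mul_pos_of_neg_of_neg habR hx01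
      have ha1 : (1:ℝ) ≤ |(a:ℝ)| := by exact_mod_cast Int.one_le_abs ha
      calc |x0| ≤ |(a:ℝ) * x0| := by rw [abs_mul]; nlinarith [abs_nonneg x0]
        _ ≤ |(a:ℝ) * x0 + (b:ℝ) * x1| := abs_le_abs_add huv.le


theorem den_growth (hα : Irrational α) {M : ℝ}
    (hM : ∀ n : ℕ, ∀ b : ℝ, (GenContFract.of α).partDens.get? n = some b → b ≤ M) (n : ℕ) :
    (GenContFract.of α).dens (n+1) ≤ (M + 1) * (GenContFract.of α).dens n := by
  cases n with
  | zero =>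
    obtain ⟨b, hget, hb1, -, hpd⟩ := s_get hα 0
    have hbM := hM 0 b hpd
    rw [first_den_eq hget, zeroth_den_eq_one]
    linarith
  | succ n =>
    obtain ⟨b, hb1, -, hpd, hrec, -⟩ := den_rec hα n
    have hbM := hM (n+1) b hpd
    have hmono : (GenContFract.of α).dens n ≤ (GenContFract.of α).dens (n+1) := of_den_mono
    have hpos := den_pos hα (n+1)
    rw [hrec]
    nlinarith

theorem den_arch (hα : Irrational α) (x : ℝ) : ∃ n : ℕ, x < (GenContFract.of α).dens n := by
  have key : ∀ k : ℕ, (k : ℝ) ≤ (GenContFract.of α).dens (2 * k) := by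
    intro k
    induction k with
    | zero => simpa using (den_pos hα 0).le
    | succ k ih =>
      have h1 := den_add hα (2 * k)
      have h2 := one_le_den hα (2 * k + 1)
      have heq : 2 * (k + 1) = 2 * k + 2 := by omega
      rw [heq]
      push_cast
      linarith
  obtain ⟨k, hk⟩ := exists_nat_gt x
  exact ⟨2 * k, lt_of_lt_of_le hk (key k)⟩

theorem exists_between (hα : Irrational α) {x : ℝ} (hx : 1 ≤ x) :
    ∃ n : ℕ, (GenContFract.of α).dens n ≤ x ∧ x < (GenContFract.of α).dens (n+1) := by
  classical
  have h : ∃ n, x < (GenContFract.of α).dens n := den_arch hα x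
  let N := Nat.find h
  have hN : x < (GenContFract.of α).dens N := Nat.find_spec h
  have hN0 : N ≠ 0 := by
    intro h0
    rw [h0, zeroth_den_eq_one] at hN
    linarith
  obtain ⟨m, hm⟩ : ∃ m, N = m + 1 := ⟨N - 1, by omega⟩
  refine ⟨m, ?_, by rw [← hm]; exact hN⟩
  by_contra hc
  exact Nat.find_min h (by omega : m < N) (lt_of_not_ge hc)

/-- badly approximable -/
theorem bad_approx (hα : Irrational α) {M : ℝ}
    (hM : ∀ n : ℕ, ∀ b : ℝ, (GenContFract.of α).partDens.get? n = some b → b ≤ M) :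
    ∃ c0 > (0:ℝ), ∀ Q P : ℤ, Q ≠ 0 → c0 / |(Q:ℝ)| ≤ |(Q:ℝ) * α - (P:ℝ)| := by
  have hM1 : 1 ≤ M := by
    obtain ⟨b, -, hb1, -, hpd⟩ := s_get hα 0
    exact le_trans hb1 (hM 0 b hpd)
  refine ⟨1 / (2 * (M + 1)), by positivity, ?_⟩
  -- first for positive Q
  have main : ∀ Q P : ℤ, 1 ≤ Q → 1 / (2 * (M + 1)) / |(Q:ℝ)| ≤ |(Q:ℝ) * α - (P:ℝ)| := by
    intro Q P hQ
    have hQR : (1:ℝ) ≤ (Q:ℝ) := by exact_mod_cast hQ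
    obtain ⟨n, hn1, hn2⟩ := exists_between hα hQR
    have h1 := best_approx hα n P Q hQ hn2
    have h2 := abs_lower hα n
    have h3 := den_growth hα hM n
    have hdn := den_pos hα n
    have hdn1 := den_pos hα (n+1)
    have hchain : 2 * (GenContFract.of α).dens (n+1) ≤ 2 * (M+1) * (Q:ℝ) := by
      have : (GenContFract.of α).dens (n+1) ≤ (M+1) * (Q:ℝ) := by
        calc (GenContFract.of α).dens (n+1) ≤ (M+1) * (GenContFract.of α).dens n := h3
          _ ≤ (M+1) * (Q:ℝ) := by nlinarith
      linarith
    have habs : |(Q:ℝ)| = (Q:ℝ) := abs_of_pos (by linarith)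
    rw [habs, div_div]
    calc 1 / (2 * (M + 1) * (Q:ℝ)) ≤ 1 / (2 * (GenContFract.of α).dens (n+1)) := by
          apply one_div_le_one_div_of_le (by positivity) hchain
      _ ≤ |(GenContFract.of α).dens n * α - (GenContFract.of α).nums n| := h2
      _ ≤ |(Q:ℝ) * α - (P:ℝ)| := h1
  intro Q P hQ
  rcases lt_or_gt_of_ne hQ with h | h
  · have := main (-Q) (-P) (by omega)
    push_cast at this
    rw [abs_neg] at this
    calc 1 / (2 * (M + 1)) / |(Q:ℝ)| ≤ |-(Q:ℝ) * α - -(P:ℝ)| := this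
      _ = |(Q:ℝ) * α - (P:ℝ)| := by rw [← abs_neg]; ring_nf
  · exact main Q P (by omega)


end CFAux
theorem stmt10 (α : ℝ) (hα : Irrational α) (hα01 : α ∈ Set.Ioo (0:ℝ) 1)
    (hbdd : BoundedType α) (β : ℝ) (t u : ℤ) (r s : ℕ) (hr : 1 ≤ r) (hs : 1 ≤ s)
    (hβ : β = ((t : ℝ) / (r : ℝ)) * α + (u : ℝ) / (s : ℝ)) (hβ' : ¬ InZalphaZ α β) :
    ∃ c > (0:ℝ), ∀ n : ℕ, 1 ≤ n → ∀ j : ℤ, (|j| : ℝ) ≤ contDen α n →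
      nint (β - (j : ℝ) * α) ≥ c / contDen α n := by
  obtain ⟨M, hM⟩ := hbdd
  obtain ⟨c0, hc0pos, hc0⟩ := CFAux.bad_approx hα hM
  have hR : (0:ℝ) < (r:ℝ) := by exact_mod_cast hr
  have hS : (0:ℝ) < (s:ℝ) := by exact_mod_cast hs
  set K : ℝ := (s:ℝ) * |(t:ℝ)| + (r:ℝ) * (s:ℝ) with hK_def
  have hKpos : 0 < K := by positivity
  have hRS : (0:ℝ) < (r:ℝ) * (s:ℝ) := by positivity
  refine ⟨min (1 / ((r:ℝ) * (s:ℝ))) (c0 / ((r:ℝ) * (s:ℝ) * K)), by positivity, ?_⟩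
  intro n hn j hj
  set c : ℝ := min (1 / ((r:ℝ) * (s:ℝ))) (c0 / ((r:ℝ) * (s:ℝ) * K)) with hc_def
  have hcpos : 0 < c := by positivity
  set x : ℝ := β - (j:ℝ) * α with hx_def
  set k : ℤ := round x with hk_def
  set m : ℤ := (s:ℤ) * t - (r:ℤ) * (s:ℤ) * j with hm_def
  set p : ℤ := (r:ℤ) * (s:ℤ) * k - u * (r:ℤ) with hp_def
  have hden1 : (1:ℝ) ≤ contDen α n := CFAux.one_le_den hα n
  have hdenpos : (0:ℝ) < contDen α n := lt_of_lt_of_le one_pos hden1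
  have hIdent : (r:ℝ) * (s:ℝ) * (x - (k:ℝ)) = (m:ℝ) * α - (p:ℝ) := by
    rw [hx_def, hβ, hm_def, hp_def]
    push_cast
    field_simp
    ring
  have hnint : nint (β - (j:ℝ) * α) = |(m:ℝ) * α - (p:ℝ)| / ((r:ℝ) * (s:ℝ)) := by
    rw [show β - (j:ℝ) * α = x from hx_def.symm]
    unfold nint
    rw [← hk_def, eq_div_iff hRS.ne', ← hIdent, abs_mul, abs_of_pos hRS]
    ring
  rw [hnint, ge_iff_le]
  rcases eq_or_ne m 0 with hm0 | hm0
  · -- m = 0 : β - jα is a nonzero rational with denominator dividing r*s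
    have hp0 : p ≠ 0 := by
      intro hp0
      apply hβ'
      refine ⟨j, k, ?_⟩
      have : (r:ℝ) * (s:ℝ) * (x - (k:ℝ)) = 0 := by
        rw [hIdent, hm0, hp0]; push_cast; ring
      have hxk : x = (k:ℝ) := by
        have := mul_eq_zero.mp this
        rcases this with h | h
        · exact absurd h hRS.ne'
        · linarith
      rw [hx_def] at hxk
      linarith
    have hp1 : (1:ℝ) ≤ |(p:ℝ)| := by exact_mod_cast Int.one_le_abs hp0
    have habs : |(m:ℝ) * α - (p:ℝ)| = |(p:ℝ)| := by
      rw [hm0]; push_cast; rw [zero_mul, zero_sub, abs_neg]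
    rw [habs]
    calc c / contDen α n ≤ c / 1 := by gcongr
      _ = c := div_one c
      _ ≤ 1 / ((r:ℝ) * (s:ℝ)) := min_le_left _ _
      _ ≤ |(p:ℝ)| / ((r:ℝ) * (s:ℝ)) := by gcongr
  · -- m ≠ 0 : use badly approximability
    have hbad := hc0 m p hm0
    have hm1 : (1:ℝ) ≤ |(m:ℝ)| := by exact_mod_cast Int.one_le_abs hm0
    have hmbound : |(m:ℝ)| ≤ K * contDen α n := by
      have hjb : |(j:ℝ)| ≤ contDen α n := by
        exact hj
      have h1 : (s:ℝ) * |(t:ℝ)| ≤ (s:ℝ) * |(t:ℝ)| * contDen α n :=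
        le_mul_of_one_le_right (by positivity) hden1
      have h2 : (r:ℝ) * (s:ℝ) * |(j:ℝ)| ≤ (r:ℝ) * (s:ℝ) * contDen α n :=
        mul_le_mul_of_nonneg_left hjb (by positivity)
      calc |(m:ℝ)| = |(s:ℝ) * (t:ℝ) - (r:ℝ) * (s:ℝ) * (j:ℝ)| := by rw [hm_def]; push_cast; rfl
        _ ≤ |(s:ℝ) * (t:ℝ)| + |(r:ℝ) * (s:ℝ) * (j:ℝ)| := abs_sub _ _
        _ = (s:ℝ) * |(t:ℝ)| + (r:ℝ) * (s:ℝ) * |(j:ℝ)| := by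
            simp [abs_mul, abs_of_pos hR, abs_of_pos hS, mul_assoc]
        _ ≤ (s:ℝ) * |(t:ℝ)| * contDen α n + (r:ℝ) * (s:ℝ) * contDen α n := by linarith
        _ = K * contDen α n := by rw [hK_def]; ring
    have hmabs : (0:ℝ) < |(m:ℝ)| := by linarith
    calc c / contDen α n ≤ c0 / ((r:ℝ) * (s:ℝ) * K) / contDen α n := by
          gcongr
          exact min_le_right _ _
      _ = c0 / ((r:ℝ) * (s:ℝ)) / (K * contDen α n) := by
          rw [div_div, div_div]; ring_nf
      _ ≤ c0 / ((r:ℝ) * (s:ℝ)) / |(m:ℝ)| := by gcongr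
      _ = c0 / |(m:ℝ)| / ((r:ℝ) * (s:ℝ)) := by
          rw [div_div, div_div, mul_comm]
      _ ≤ |(m:ℝ) * α - (p:ℝ)| / ((r:ℝ) * (s:ℝ)) := by gcongr
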